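/- Let p and q be integers with p ≡ 2 (mod 4), q ≡ 3 (mod 4), and p² + 4q ≠ 0, and let (u_n)_{n≥0} be the Lucas sequence defined by u_0 = 0, u_1 = 1, and u_{n+2} = p·u_{n+1} + q·u_n. Then for every n ≥ 1 the 2-adic valuation of u_n equals the 2-adic valuation of n, i.e., ν₂(u_n) = ν₂(n); in particular, for every k ≥ 1, 2^k divides u_n if and only if 2^k divides n, so the order of appearance of 2^k in (u_n) is z(2^k) = 2^k. -/

import Mathlib

/-- If `p ≡ 2 (mod 4)`, `q ≡ 3 (mod 4)` and `p² + 4q ≠ 0`, then the Lucas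
sequence `u` satisfies `ν₂(u n) = ν₂(n)` for every `n ≥ 1`; in particular for every
`k ≥ 1`, `2^k ∣ u n ↔ 2^k ∣ n`, so the order of appearance of `2^k` is `z(2^k) = 2^k`. -/
theorem stmt10 (p q : ℤ) (hp : p % 4 = 2) (hq : q % 4 = 3) (hD : p ^ 2 + 4 * q ≠ 0)
    (u : ℕ → ℤ) (h0 : u 0 = 0) (h1 : u 1 = 1)
    (hrec : ∀ n : ℕ, u (n + 2) = p * u (n + 1) + q * u n) :
    (∀ n : ℕ, 1 ≤ n → padicValInt 2 (u n) = padicValNat 2 n) ∧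
    (∀ k : ℕ, 1 ≤ k → ∀ n : ℕ, 1 ≤ n → (((2 ^ k : ℤ) ∣ u n) ↔ (2 ^ k ∣ n))) ∧
    (∀ k : ℕ, 1 ≤ k → sInf {n : ℕ | 0 < n ∧ (2 ^ k : ℤ) ∣ u n} = 2 ^ k) := by
  obtain ⟨a, ha⟩ : ∃ a, p = 4 * a + 2 := ⟨p / 4, by omega⟩
  obtain ⟨b, hb⟩ : ∃ b, q = 4 * b + 3 := ⟨q / 4, by omega⟩
  have hu2 : u 2 = p := by rw [hrec 0, h0, h1]; ring
  -- addition formula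
  have add : ∀ m, (∀ n, u (n + 1 + m) = u (m + 1) * u (n + 1) + q * u m * u n) ∧
      (∀ n, u (n + 1 + (m + 1)) = u (m + 2) * u (n + 1) + q * u (m + 1) * u n) := by
    intro m
    induction m with
    | zero =>
      constructor
      · intro n; rw [h1, h0]; ring
      · intro n; rw [hu2, h1, show n + 1 + 1 = n + 2 from rfl, hrec n]; ring
    | succ m ih =>
      refine ⟨ih.2, fun n => ?_⟩
      have e1 : u (n + 1 + (m + 1 + 1)) = p * u (n + 1 + (m + 1)) + q * u (n + 1 + m) := by
        have := hrec (n + 1 + m)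
        rw [show n + 1 + (m + 1 + 1) = n + 1 + m + 2 by omega,
          show n + 1 + (m + 1) = n + 1 + m + 1 by omega]
        exact this
      have e2 : u (m + 1 + 2) = p * u (m + 2) + q * u (m + 1) := by
        have := hrec (m + 1)
        convert this using 2 <;> omega
      rw [e1, ih.2 n, ih.1 n]
      linear_combination (-(q * u n)) * hrec m - u (n + 1) * e2
  -- doubling formula
  have dbl : ∀ n : ℕ, u (2 * (n + 1)) = u (n + 1) * (u (n + 2) + q * u n) := by
    intro n
    have h := (add (n + 1)).1 n
    rw [show 2 * (n + 1) = n + 1 + (n + 1) from by ring, h]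
    ring
  -- companion values ≡ 2 mod 4
  have hw : ∀ n : ℕ, (∃ c : ℤ, u (n + 2) + q * u n = 4 * c + 2) ∧
      (∃ c : ℤ, u (n + 3) + q * u (n + 1) = 4 * c + 2) := by
    intro n
    induction n with
    | zero =>
      constructor
      · exact ⟨a, by rw [hu2, h0, ha]; ring⟩
      · refine ⟨4 * a ^ 2 + 4 * a + 2 * b + 2, ?_⟩
        rw [show (3:ℕ) = 1 + 2 from rfl, hrec 1, hu2, h1, ha, hb]; ring
    | succ n ih =>
      obtain ⟨⟨c, hc⟩, ⟨d, hd⟩⟩ := ih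
      refine ⟨⟨d, hd⟩, ⟨4*a*d + 2*a + 2*d + 4*b*c + 2*b + 3*c + 2, ?_⟩⟩
      show u (n + 4) + q * u (n + 2) = _
      have e1 : u (n + 4) = p * u (n + 3) + q * u (n + 2) := by
        have := hrec (n + 2)
        convert this using 2 <;> omega
      linear_combination e1 + q * hrec n + p * hd + q * hc + (4*d+2) * ha + (4*c+2) * hb
  -- parity
  have par : ∀ n : ℕ, u n % 2 = (n : ℤ) % 2 := by
    have key : ∀ n : ℕ, u n % 2 = (n : ℤ) % 2 ∧ u (n + 1) % 2 = ((n : ℤ) + 1) % 2 := by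
      intro n
      induction n with
      | zero => exact ⟨by rw [h0]; norm_num, by rw [h1]; norm_num⟩
      | succ n ih =>
        obtain ⟨C, hC⟩ : ∃ C, u (n + 2) = 2 * C + u n :=
          ⟨(2*a+1) * u (n+1) + (2*b+1) * u n, by rw [hrec, ha, hb]; ring⟩
        refine ⟨by push_cast; exact ih.2, ?_⟩
        show u (n + 2) % 2 = _
        push_cast
        omega
    intro n; exact (key n).1
  -- main valuation statement, plus nonvanishing
  have main : ∀ n : ℕ, 1 ≤ n → u n ≠ 0 ∧ padicValInt 2 (u n) = padicValNat 2 n := by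
    intro n
    induction n using Nat.strong_induction_on with
    | _ n ih =>
      intro hn
      rcases Nat.even_or_odd n with he | ho
      · -- n even, n = 2*(m+1)
        obtain ⟨m, hm⟩ : ∃ m, n = 2 * (m + 1) := by
          obtain ⟨t, ht⟩ := he; exact ⟨t - 1, by omega⟩
        obtain ⟨c, hc⟩ := (hw m).1
        have hdd : u n = u (m + 1) * (2 * (2 * c + 1)) := by
          rw [hm, dbl m, hc]; ring
        obtain ⟨hne, hval⟩ := ih (m + 1) (by omega) (by omega)
        have hodd : ¬ ((2:ℕ):ℤ) ∣ (2 * c + 1) := by push_cast; omega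
        have hv2 : padicValInt 2 (2 * (2 * c + 1) : ℤ) = 1 := by
          rw [padicValInt.mul (by norm_num) (by omega),
            padicValInt.eq_zero_of_not_dvd hodd]
          have := padicValInt.self (p := 2) one_lt_two
          simpa using this
        have hprod : padicValInt 2 (u n) = padicValNat 2 (m + 1) + 1 := by
          rw [hdd, padicValInt.mul hne (by omega), hv2, hval]
        constructor
        · rw [hdd]; exact mul_ne_zero hne (by omega)
        · rw [hprod, hm, padicValNat.mul (by norm_num) (by omega)]
          have h2 : padicValNat 2 2 = 1 := padicValNat.self one_lt_two
          omega
      · -- n odd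
        obtain ⟨t, ht⟩ := ho
        have h2 : u n % 2 = 1 := by
          have := par n
          omega
        constructor
        · omega
        · rw [padicValInt.eq_zero_of_not_dvd (by push_cast; omega),
            padicValNat.eq_zero_of_not_dvd (by omega)]
  have part2 : ∀ k : ℕ, 1 ≤ k → ∀ n : ℕ, 1 ≤ n → (((2 ^ k : ℤ) ∣ u n) ↔ (2 ^ k ∣ n)) := by
    intro k hk n hn
    obtain ⟨hne, hval⟩ := main n hn
    have hna : (u n).natAbs ≠ 0 := by simpa using hne
    have h1' : ((2 ^ k : ℤ) ∣ u n) ↔ (2 ^ k ∣ (u n).natAbs) := by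
      rw [show ((2:ℤ) ^ k) = ((2 ^ k : ℕ) : ℤ) by push_cast; ring, Int.ofNat_dvd_left]
    rw [h1', padicValNat_dvd_iff_le hna, padicValNat_dvd_iff_le (by omega : n ≠ 0)]
    have hr : padicValNat 2 (u n).natAbs = padicValInt 2 (u n) := rfl
    omega
  refine ⟨fun n hn => (main n hn).2, part2, ?_⟩
  intro k hk
  have hpos : 0 < 2 ^ k := Nat.pow_pos (by norm_num)
  have hmem : 2 ^ k ∈ {n : ℕ | 0 < n ∧ (2 ^ k : ℤ) ∣ u n} :=
    ⟨hpos, (part2 k hk (2 ^ k) hpos).mpr dvd_rfl⟩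
  refine le_antisymm (Nat.sInf_le hmem) ?_
  obtain ⟨hpos', hdvd⟩ := Nat.sInf_mem (⟨_, hmem⟩ :
    {n : ℕ | 0 < n ∧ (2 ^ k : ℤ) ∣ u n}.Nonempty)
  exact Nat.le_of_dvd hpos' ((part2 k hk _ hpos').mp hdvd)
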